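/- Block off-diagonal distortion implies diagonal distortion: with $O^c = (A\times C)\cup(C\times A)$ and $\tilde\Theta$ the maximum-determinant completion, if $(i,j) \in A\times(A\cup B)$ with $i\neq j$ and $\tilde\Theta_{ij} \neq \Theta_{ij}$, then $\tilde\Theta_{ii} < \Theta_{ii}$. Similarly, if $(i,j) \in (B\cup C)\times C$ with $i\neq j$ and $\tilde\Theta_{ij} \neq \Theta_{ij}$, then $\tilde\Theta_{jj} < \Theta_{jj}$. -/

import Mathlib

open Matrix

private theorem aux_madgq (p : ℕ) (Θ Θ' : Matrix (Fin p) (Fin p) ℝ)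
    (hΘ : Θ.PosDef) (hΘ' : Θ'.PosDef) (A C : Finset (Fin p))
    (hz1 : ∀ i ∈ A, ∀ j ∈ C, Θ' i j = 0)
    (hagree : ∀ i j : Fin p, ¬((i ∈ A ∧ j ∈ C) ∨ (i ∈ C ∧ j ∈ A)) →
      Θ'⁻¹ i j = Θ⁻¹ i j) :
    ∀ i ∈ A, ∀ j : Fin p, Θ' i j ≠ Θ i j → Θ' i i < Θ i i := by
  intro i hi j hj
  have hsymΘ : ∀ a b, Θ a b = Θ b a := fun a b => (hΘ.isHermitian.apply a b).symm
  have hdΘ : IsUnit Θ.det := hΘ.det_pos.ne'.isUnit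
  have hdΘ' : IsUnit Θ'.det := hΘ'.det_pos.ne'.isUnit
  set Δ : Matrix (Fin p) (Fin p) ℝ := Θ'⁻¹ - Θ⁻¹ with hΔ
  have hM : Θ' * Δ * Θ = Θ - Θ' := by
    rw [hΔ, mul_sub, Matrix.mul_nonsing_inv _ hdΘ', sub_mul, one_mul,
      Matrix.mul_assoc, Matrix.nonsing_inv_mul _ hdΘ, Matrix.mul_one]
  set v : Fin p → ℝ := fun l => ∑ k, Θ' i k * Δ k l with hv
  have hMv : ∀ m, Θ i m - Θ' i m = ∑ l, v l * Θ l m := by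
    intro m
    have h1 : (Θ' * Δ * Θ) i m = ∑ l, v l * Θ l m := by
      rw [Matrix.mul_apply]
      refine Finset.sum_congr rfl fun l _ => ?_
      rw [Matrix.mul_apply]
    have h2 := congrFun (congrFun hM i) m
    rw [h1] at h2
    rw [← Matrix.sub_apply, ← h2]
  have hvC : ∀ l, l ∉ C → v l = 0 := by
    intro l hl
    apply Finset.sum_eq_zero
    intro k _
    by_cases hk : k ∈ C ∧ l ∈ A
    · rw [hz1 i hi k hk.1, zero_mul]
    · have hΔ0 : Δ k l = 0 := by
        have h := hagree k l (by tauto)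
        simp [hΔ, Matrix.sub_apply, h]
      rw [hΔ0, mul_zero]
  have hvne : v ≠ 0 := by
    intro h0
    apply hj
    have h1 : Θ i j - Θ' i j = 0 := by
      rw [hMv j]
      apply Finset.sum_eq_zero
      intro l _
      rw [congrFun h0 l, Pi.zero_apply, zero_mul]
    linarith [sub_eq_zero.mp h1]
  have hquad : 0 < dotProduct (star v) (Θ *ᵥ v) := hΘ.dotProduct_mulVec_pos hvne
  have hkey : dotProduct (star v) (Θ *ᵥ v) = Θ i i - Θ' i i := by
    have h1 : dotProduct (star v) (Θ *ᵥ v) = ∑ m, v m * ∑ l, v l * Θ l m := by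
      rw [dotProduct, Finset.sum_congr rfl]
      intro m _
      rw [Matrix.mulVec, dotProduct]
      simp only [star_apply, star_trivial]
      congr 1
      refine Finset.sum_congr rfl fun l _ => ?_
      rw [hsymΘ m l, mul_comm]
    rw [h1]
    have h2 : ∀ m : Fin p, v m * ∑ l, v l * Θ l m = v m * Θ m i := by
      intro m
      rw [← hMv m]
      by_cases hm : v m = 0
      · rw [hm, zero_mul, zero_mul]
      · have hmC : m ∈ C := by
          by_contra hmc
          exact hm (hvC m hmc)
        rw [hz1 i hi m hmC, sub_zero, hsymΘ i m]
    rw [Finset.sum_congr rfl fun m _ => h2 m, ← hMv i]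
  rw [hkey] at hquad
  linarith

/-- Block off-diagonal distortion implies diagonal distortion:
with `O^c = (A×C) ∪ (C×A)` and `Θ'` the maximum-determinant completion, if
`(i,j) ∈ A×(A∪B)`, `i ≠ j` and `Θ'_{ij} ≠ Θ_{ij}`, then `Θ'_{ii} < Θ_{ii}`;
if `(i,j) ∈ (B∪C)×C`, `i ≠ j` and `Θ'_{ij} ≠ Θ_{ij}`, then `Θ'_{jj} < Θ_{jj}`. -/
theorem madgq_offdiag_implies_diag (p : ℕ) (Θ Θ' : Matrix (Fin p) (Fin p) ℝ)
    (hΘ : Θ.PosDef) (hΘ' : Θ'.PosDef) (A B C : Finset (Fin p))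
    (hAB : Disjoint A B) (hAC : Disjoint A C) (hBC : Disjoint B C)
    (hcover : A ∪ B ∪ C = Finset.univ)
    (hz1 : ∀ i ∈ A, ∀ j ∈ C, Θ' i j = 0)
    (hz2 : ∀ i ∈ C, ∀ j ∈ A, Θ' i j = 0)
    (hagree : ∀ i j : Fin p, ¬((i ∈ A ∧ j ∈ C) ∨ (i ∈ C ∧ j ∈ A)) →
      Θ'⁻¹ i j = Θ⁻¹ i j) :
    (∀ i ∈ A, ∀ j ∈ A ∪ B, i ≠ j → Θ' i j ≠ Θ i j → Θ' i i < Θ i i) ∧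
    (∀ i ∈ B ∪ C, ∀ j ∈ C, i ≠ j → Θ' i j ≠ Θ i j → Θ' j j < Θ j j) := by
  constructor
  · intro i hi j _ _ hne
    exact aux_madgq p Θ Θ' hΘ hΘ' A C hz1 hagree i hi j hne
  · intro i _ j hj _ hne
    have hsymΘ : ∀ a b, Θ a b = Θ b a := fun a b => (hΘ.isHermitian.apply a b).symm
    have hsymΘ' : ∀ a b, Θ' a b = Θ' b a := fun a b => (hΘ'.isHermitian.apply a b).symm
    have hne' : Θ' j i ≠ Θ j i := by
      rw [hsymΘ' j i, hsymΘ j i]; exact hne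
    exact aux_madgq p Θ Θ' hΘ hΘ' C A hz2
      (fun a b h => hagree a b (by tauto)) j hj i hne'
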